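/- Convergence of the Weierstrass method for Z³: if z ∈ ℂ³ lies in the hyperplane z₁ + z₂ + z₃ = 0 and z is not a scalar multiple of a vector with all real entries, then the orbit of z under W_{Z³} is defined for all iterates and converges to the zero vector, with linear rate of convergence 2/3 (i.e., ‖W_{Z³}^{∘(n+1)}(z)‖ / ‖W_{Z³}^{∘n}(z)‖ → 2/3). -/

import Mathlib

open Polynomial Finset Filter


noncomputable def vv (ω u : ℂ) : Fin 3 → ℂ := ![1 - u, ω - ω^2*u, ω^2 - ω*u]

noncomputable def Useq (u : ℂ) : ℕ → ℂ
  | 0 => u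
  | n+1 => (Useq u n) * (1 + 2*(Useq u n)^3) / (2 + (Useq u n)^3)

noncomputable def Aseq (a u : ℂ) : ℕ → ℂ
  | 0 => a
  | n+1 => (Aseq a u n) * ((2 + (Useq u n)^3) / (3*(1 + (Useq u n)^3)))

lemma omega_ne_one (ω : ℂ) (hω : ω^2 + ω + 1 = 0) : (1:ℂ) - ω ≠ 0 := by
  intro h
  have h1 : ω = 1 := by linear_combination -h
  rw [h1] at hω; norm_num at hω

lemma omega_sq_ne_one (ω : ℂ) (hω : ω^2 + ω + 1 = 0) : (1:ℂ) - ω^2 ≠ 0 := by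
  intro h
  have h1 : ω = -2 := by linear_combination hω + h
  rw [h1] at hω; norm_num at hω

lemma omega_ne_sq (ω : ℂ) (hω : ω^2 + ω + 1 = 0) : ω - ω^2 ≠ 0 := by
  intro h
  have h1 : ω = -(1/2) := by linear_combination (1/2)*hω + (1/2)*h
  rw [h1] at hω; norm_num at hω

lemma norm_omega (ω : ℂ) (hω : ω^2 + ω + 1 = 0) : ‖ω‖ = 1 := by
  have h3 : ω^3 = 1 := by linear_combination (ω - 1) * hω
  have h : ‖ω‖^3 = 1 := by rw [← norm_pow, h3, norm_one]
  nlinarith [norm_nonneg ω, sq_nonneg (‖ω‖-1), sq_nonneg (‖ω‖+1)]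

lemma one_add_ne (ζ u : ℂ) (hζ : ‖ζ‖ ≤ 1) (hu : ‖u‖ < 1) : 1 + ζ * u ≠ 0 := by
  intro h
  have h1 : ζ * u = -1 := by linear_combination h
  have h2 := congrArg norm h1
  rw [norm_mul, norm_neg, norm_one] at h2
  nlinarith [norm_nonneg ζ, norm_nonneg u]

lemma one_add_ne' (u : ℂ) (hu : ‖u‖ < 1) : (1:ℂ) + u ≠ 0 := by
  intro h
  have h1 : u = -1 := by linear_combination h
  rw [h1] at hu; norm_num at hu

lemma one_add_cube_ne (u : ℂ) (hu : ‖u‖ < 1) : (1:ℂ) + u^3 ≠ 0 := by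
  intro h
  have h1 : u^3 = -1 := by linear_combination h
  have h2 := congrArg norm h1
  rw [norm_pow, norm_neg, norm_one] at h2
  have h3 : ‖u‖^3 < 1 := pow_lt_one₀ (norm_nonneg u) hu (by norm_num)
  linarith

lemma two_add_cube_ne (u : ℂ) (hu : ‖u‖ < 1) : (2:ℂ) + u^3 ≠ 0 := by
  intro h
  have h1 : u^3 = -2 := by linear_combination h
  have h2 := congrArg norm h1
  rw [norm_pow] at h2
  have h4 : ‖(-2:ℂ)‖ = 2 := by norm_num
  rw [h4] at h2
  have h3 : ‖u‖^3 < 1 := pow_lt_one₀ (norm_nonneg u) hu (by norm_num)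
  linarith

lemma nz01 (ω u : ℂ) (hω : ω^2 + ω + 1 = 0) (hu : ‖u‖ < 1) :
    (1 - u) - (ω - ω^2*u) ≠ 0 := by
  have e : (1 - u) - (ω - ω^2*u) = (1-ω)*(1+ω^2*u) := by
    linear_combination u*(ω-1) * hω
  rw [e]
  refine mul_ne_zero (omega_ne_one ω hω) (one_add_ne _ _ ?_ hu)
  rw [norm_pow, norm_omega ω hω]; norm_num

lemma nz02 (ω u : ℂ) (hω : ω^2 + ω + 1 = 0) (hu : ‖u‖ < 1) :
    (1 - u) - (ω^2 - ω*u) ≠ 0 := by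
  have e : (1 - u) - (ω^2 - ω*u) = (1-ω^2)*(1+ω*u) := by
    linear_combination u*(ω-1) * hω
  rw [e]
  exact mul_ne_zero (omega_sq_ne_one ω hω) (one_add_ne _ _ (le_of_eq (norm_omega ω hω)) hu)

lemma nz12 (ω u : ℂ) (hω : ω^2 + ω + 1 = 0) (hu : ‖u‖ < 1) :
    (ω - ω^2*u) - (ω^2 - ω*u) ≠ 0 := by
  have e : (ω - ω^2*u) - (ω^2 - ω*u) = (ω-ω^2)*(1+u) := by ring
  rw [e]
  exact mul_ne_zero (omega_ne_sq ω hω) (one_add_ne' u hu)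

lemma prod_erase0 (f : Fin 3 → ℂ) :
    ∏ j ∈ univ.erase (0:Fin 3), (f 0 - f j) = (f 0 - f 1) * (f 0 - f 2) := by
  have h : (univ.erase (0:Fin 3)) = {1, 2} := by decide
  rw [h, Finset.prod_insert (by decide), Finset.prod_singleton]

lemma prod_erase1 (f : Fin 3 → ℂ) :
    ∏ j ∈ univ.erase (1:Fin 3), (f 1 - f j) = (f 1 - f 0) * (f 1 - f 2) := by
  have h : (univ.erase (1:Fin 3)) = {0, 2} := by decide
  rw [h, Finset.prod_insert (by decide), Finset.prod_singleton]

lemma prod_erase2 (f : Fin 3 → ℂ) :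
    ∏ j ∈ univ.erase (2:Fin 3), (f 2 - f j) = (f 2 - f 0) * (f 2 - f 1) := by
  have h : (univ.erase (2:Fin 3)) = {0, 1} := by decide
  rw [h, Finset.prod_insert (by decide), Finset.prod_singleton]

lemma step (W : (Fin 3 → ℂ) → Fin 3 → ℂ)
    (hW : ∀ (w : Fin 3 → ℂ) (k : Fin 3),
      W w k = w k - (w k) ^ 3 / ∏ j ∈ univ.erase k, (w k - w j))
    (ω a u : ℂ) (hω : ω^2 + ω + 1 = 0) (ha : a ≠ 0) (hu : ‖u‖ < 1) :
    W (fun k => a * vv ω u k)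
      = fun k => (a * ((2 + u^3) / (3*(1 + u^3)))) * vv ω (u * (1 + 2*u^3) / (2 + u^3)) k := by
  have h1u := one_add_cube_ne u hu
  have h2u := two_add_cube_ne u hu
  have e01 : a * vv ω u 0 - a * vv ω u 1 = a * ((1 - u) - (ω - ω^2*u)) := by
    show a * (1-u) - a * (ω - ω^2*u) = _; ring
  have e02 : a * vv ω u 0 - a * vv ω u 2 = a * ((1 - u) - (ω^2 - ω*u)) := by
    show a * (1-u) - a * (ω^2 - ω*u) = _; ring
  have e12 : a * vv ω u 1 - a * vv ω u 2 = a * ((ω - ω^2*u) - (ω^2 - ω*u)) := by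
    show a * (ω - ω^2*u) - a * (ω^2 - ω*u) = _; ring
  have d01 : a * vv ω u 0 - a * vv ω u 1 ≠ 0 := by
    rw [e01]; exact mul_ne_zero ha (nz01 ω u hω hu)
  have d02 : a * vv ω u 0 - a * vv ω u 2 ≠ 0 := by
    rw [e02]; exact mul_ne_zero ha (nz02 ω u hω hu)
  have d12 : a * vv ω u 1 - a * vv ω u 2 ≠ 0 := by
    rw [e12]; exact mul_ne_zero ha (nz12 ω u hω hu)
  funext k
  rw [hW]
  fin_cases k
  · show a * vv ω u 0 - (a * vv ω u 0)^3 / ∏ j ∈ univ.erase (0:Fin 3), (a * vv ω u 0 - a * vv ω u j)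
      = a * ((2 + u^3) / (3*(1 + u^3))) * vv ω (u * (1 + 2*u^3) / (2 + u^3)) 0
    rw [prod_erase0 (fun k => a * vv ω u k)]
    show a*(1-u) - (a*(1-u))^3 / ((a*(1-u) - a*(ω-ω^2*u)) * (a*(1-u) - a*(ω^2-ω*u)))
      = a*((2+u^3)/(3*(1+u^3))) * (1 - u*(1+2*u^3)/(2+u^3))
    have hD : (a*(1-u) - a*(ω-ω^2*u)) * (a*(1-u) - a*(ω^2-ω*u)) ≠ 0 := mul_ne_zero d01 d02
    generalize hDd : (a*(1-u) - a*(ω-ω^2*u)) * (a*(1-u) - a*(ω^2-ω*u)) = D at hD ⊢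
    field_simp
    subst hDd
    linear_combination ((1)*ω^2*u^5*a^2 + (-2)*ω^2*u^4*a^2 + (2)*ω^2*u^2*a^2 + (-1)*ω^2*u*a^2 + (-1)*ω*u^6*a^2 + (1)*ω*u^5*a^2 + (1)*ω*u^4*a^2 + (-1)*ω*u^2*a^2 + (-1)*ω*u*a^2 + (1)*ω*a^2 + (2)*u^6*a^2 + (-5)*u^5*a^2 + (4)*u^4*a^2 + (-4)*u^2*a^2 + (5)*u*a^2 + (-2)*a^2) * hω
  · show a * vv ω u 1 - (a * vv ω u 1)^3 / ∏ j ∈ univ.erase (1:Fin 3), (a * vv ω u 1 - a * vv ω u j)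
      = a * ((2 + u^3) / (3*(1 + u^3))) * vv ω (u * (1 + 2*u^3) / (2 + u^3)) 1
    rw [prod_erase1 (fun k => a * vv ω u k)]
    show a*(ω-ω^2*u) - (a*(ω-ω^2*u))^3 / ((a*(ω-ω^2*u) - a*(1-u)) * (a*(ω-ω^2*u) - a*(ω^2-ω*u)))
      = a*((2+u^3)/(3*(1+u^3))) * (ω - ω^2*(u*(1+2*u^3)/(2+u^3)))
    have d10 : a*(ω-ω^2*u) - a*(1-u) ≠ 0 := by
      intro h; exact d01 (by show a * (1-u) - a * (ω - ω^2*u) = 0; linear_combination -h)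
    have hD : (a*(ω-ω^2*u) - a*(1-u)) * (a*(ω-ω^2*u) - a*(ω^2-ω*u)) ≠ 0 := mul_ne_zero d10 d12
    generalize hDd : (a*(ω-ω^2*u) - a*(1-u)) * (a*(ω-ω^2*u) - a*(ω^2-ω*u)) = D at hD ⊢
    field_simp
    subst hDd
    linear_combination ((2)*ω^4*u^6*a^2 + (-1)*ω^4*u^5*a^2 + (1)*ω^4*u^3*a^2 + (-2)*ω^4*u^2*a^2 + (-1)*ω^3*u^6*a^2 + (-4)*ω^3*u^5*a^2 + (3)*ω^3*u^4*a^2 + (1)*ω^3*u^3*a^2 + (-2)*ω^3*u^2*a^2 + (3)*ω^3*u*a^2 + (2)*ω^2*u^5*a^2 + (-2)*ω^2*u^3*a^2 + (1)*ω^2*u^2*a^2 + (-1)*ω^2*a^2) * hω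
  · show a * vv ω u 2 - (a * vv ω u 2)^3 / ∏ j ∈ univ.erase (2:Fin 3), (a * vv ω u 2 - a * vv ω u j)
      = a * ((2 + u^3) / (3*(1 + u^3))) * vv ω (u * (1 + 2*u^3) / (2 + u^3)) 2
    rw [prod_erase2 (fun k => a * vv ω u k)]
    show a*(ω^2-ω*u) - (a*(ω^2-ω*u))^3 / ((a*(ω^2-ω*u) - a*(1-u)) * (a*(ω^2-ω*u) - a*(ω-ω^2*u)))
      = a*((2+u^3)/(3*(1+u^3))) * (ω^2 - ω*(u*(1+2*u^3)/(2+u^3)))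
    have d20 : a*(ω^2-ω*u) - a*(1-u) ≠ 0 := by
      intro h; exact d02 (by show a * (1-u) - a * (ω^2 - ω*u) = 0; linear_combination -h)
    have d21 : a*(ω^2-ω*u) - a*(ω-ω^2*u) ≠ 0 := by
      intro h; exact d12 (by show a * (ω-ω^2*u) - a * (ω^2 - ω*u) = 0; linear_combination -h)
    have hD : (a*(ω^2-ω*u) - a*(1-u)) * (a*(ω^2-ω*u) - a*(ω-ω^2*u)) ≠ 0 := mul_ne_zero d20 d21
    generalize hDd : (a*(ω^2-ω*u) - a*(1-u)) * (a*(ω^2-ω*u) - a*(ω-ω^2*u)) = D at hD ⊢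
    field_simp
    subst hDd
    linear_combination ((2)*ω^4*u^4*a^2 + (-1)*ω^4*u^3*a^2 + (1)*ω^4*u*a^2 + (-2)*ω^4*a^2 + (-3)*ω^3*u^5*a^2 + (2)*ω^3*u^4*a^2 + (-1)*ω^3*u^3*a^2 + (-3)*ω^3*u^2*a^2 + (4)*ω^3*u*a^2 + (1)*ω^3*a^2 + (1)*ω^2*u^6*a^2 + (-1)*ω^2*u^4*a^2 + (2)*ω^2*u^3*a^2 + (-2)*ω^2*u*a^2) * hω

lemma normsq (z : ℂ) : ‖z‖^2 = z.re^2 + z.im^2 := by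
  rw [Complex.sq_norm, Complex.normSq_apply]; ring

lemma norm_id (x : ℂ) : ‖1 + 2*x‖^2 = ‖2 + x‖^2 - 3*(1 - ‖x‖^2) := by
  rw [normsq, normsq, normsq]
  simp only [Complex.add_re, Complex.add_im, Complex.mul_re, Complex.mul_im,
    Complex.one_re, Complex.one_im, Complex.re_ofNat, Complex.im_ofNat]
  ring

lemma gstep (t : ℝ) (ht : t < 1) (v : ℂ) (hv : ‖v‖ ≤ t) :
    ‖v * (1 + 2*v^3) / (2 + v^3)‖^2 ≤ (2 + t^6)/3 * ‖v‖^2 := by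
  have ht0 : 0 ≤ t := le_trans (norm_nonneg v) hv
  have hxn : ‖v^3‖ ≤ t^3 := by rw [norm_pow]; exact pow_le_pow_left₀ (norm_nonneg v) hv 3
  have ht3 : t^3 < 1 := pow_lt_one₀ ht0 ht (by norm_num)
  have hxlt : ‖v^3‖ < 1 := lt_of_le_of_lt hxn ht3
  have h2x : (2:ℂ) + v^3 ≠ 0 := by
    intro h
    have h1 : v^3 = -2 := by linear_combination h
    have h2 := congrArg norm h1
    have h4 : ‖(-2:ℂ)‖ = 2 := by norm_num
    rw [h4] at h2; linarith
  have hb : ‖(2:ℂ) + v^3‖ ≤ 3 := by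
    have h5 := norm_add_le (2:ℂ) (v^3)
    have h2 : ‖(2:ℂ)‖ = 2 := by norm_num
    linarith
  have hbpos : 0 < ‖(2:ℂ) + v^3‖ := norm_pos_iff.mpr h2x
  have hb2 : ‖(2:ℂ) + v^3‖^2 ≤ 9 := by nlinarith
  have hid := norm_id (v^3)
  rw [norm_div, norm_mul, div_pow, mul_pow]
  rw [div_le_iff₀ (by positivity)]
  have hx6 : ‖v^3‖^2 ≤ t^6 := by nlinarith [norm_nonneg (v^3)]
  have h1t6 : (0:ℝ) ≤ 1 - t^6 := by nlinarith [pow_lt_one₀ ht0 ht (by norm_num : (6:ℕ) ≠ 0)]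
  have hid2 : ‖v‖^2 * ‖1 + 2*v^3‖^2
      = ‖v‖^2 * ‖2+v^3‖^2 - 3*‖v‖^2 + 3*(‖v‖^2*‖v^3‖^2) := by rw [hid]; ring
  nlinarith [mul_le_mul_of_nonneg_left hx6 (sq_nonneg ‖v‖),
    mul_le_mul_of_nonneg_left hb2 (mul_nonneg (sq_nonneg ‖v‖) h1t6)]

lemma Qlt (u : ℂ) (hu : ‖u‖ < 1) : (2 + ‖u‖^6)/3 < 1 := by
  nlinarith [pow_lt_one₀ (norm_nonneg u) hu (by norm_num : (6:ℕ) ≠ 0)]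

lemma Qnn (u : ℂ) : 0 ≤ (2 + ‖u‖^6)/3 := by positivity

lemma Useq_le (u : ℂ) (hu : ‖u‖ < 1) : ∀ n, ‖Useq u n‖ ≤ ‖u‖ := by
  intro n
  induction n with
  | zero => exact le_refl _
  | succ n ih =>
    have h := gstep ‖u‖ hu (Useq u n) ih
    have h2 : ‖Useq u (n+1)‖^2 ≤ ‖u‖^2 := by
      calc ‖Useq u (n+1)‖^2 = ‖Useq u n * (1 + 2*(Useq u n)^3) / (2 + (Useq u n)^3)‖^2 := rfl
      _ ≤ (2 + ‖u‖^6)/3 * ‖Useq u n‖^2 := h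
      _ ≤ 1 * ‖u‖^2 := by
          apply mul_le_mul (le_of_lt (Qlt u hu)) ?_ (sq_nonneg _) (by norm_num)
          nlinarith [norm_nonneg (Useq u n), norm_nonneg u]
      _ = ‖u‖^2 := one_mul _
    nlinarith [norm_nonneg (Useq u (n+1)), norm_nonneg u]

lemma Useq_sq_le (u : ℂ) (hu : ‖u‖ < 1) :
    ∀ n, ‖Useq u n‖^2 ≤ ‖u‖^2 * ((2 + ‖u‖^6)/3)^n := by
  intro n
  induction n with
  | zero => simp [Useq]
  | succ n ih =>
    have h := gstep ‖u‖ hu (Useq u n) (Useq_le u hu n)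
    calc ‖Useq u (n+1)‖^2 = ‖Useq u n * (1 + 2*(Useq u n)^3) / (2 + (Useq u n)^3)‖^2 := rfl
    _ ≤ (2 + ‖u‖^6)/3 * ‖Useq u n‖^2 := h
    _ ≤ (2 + ‖u‖^6)/3 * (‖u‖^2 * ((2 + ‖u‖^6)/3)^n) :=
        mul_le_mul_of_nonneg_left ih (Qnn u)
    _ = ‖u‖^2 * ((2 + ‖u‖^6)/3)^(n+1) := by ring

lemma Useq_tendsto (u : ℂ) (hu : ‖u‖ < 1) : Tendsto (fun n => Useq u n) atTop (nhds 0) := by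
  rw [tendsto_zero_iff_norm_tendsto_zero]
  have hsq : Tendsto (fun n : ℕ => ‖u‖^2 * ((2 + ‖u‖^6)/3)^n) atTop (nhds 0) := by
    have := (tendsto_pow_atTop_nhds_zero_of_lt_one (Qnn u) (Qlt u hu)).const_mul (‖u‖^2)
    simpa using this
  have h2 : Tendsto (fun n => ‖Useq u n‖^2) atTop (nhds 0) :=
    squeeze_zero (fun n => sq_nonneg _) (Useq_sq_le u hu) hsq
  have h3 : (fun n => ‖Useq u n‖) = fun n => Real.sqrt (‖Useq u n‖^2) :=
    funext fun n => (Real.sqrt_sq (norm_nonneg _)).symm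
  rw [h3]
  have h5 : Tendsto (fun n => Real.sqrt (‖Useq u n‖^2)) atTop (nhds (Real.sqrt 0)) :=
    (Real.continuous_sqrt.continuousAt (x := (0:ℝ))).tendsto.comp h2
  rw [Real.sqrt_zero] at h5
  exact h5

lemma sigma_bound (v : ℂ) (hv : ‖v‖ ≤ 1/2) : ‖(2+v^3)/(3*(1+v^3))‖ ≤ 17/21 := by
  have h3 : ‖v^3‖ ≤ 1/8 := by
    rw [norm_pow]
    calc ‖v‖^3 ≤ (1/2)^3 := pow_le_pow_left₀ (norm_nonneg v) hv 3
    _ = 1/8 := by norm_num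
  have hup : ‖(2:ℂ)+v^3‖ ≤ 17/8 := by
    have := norm_add_le (2:ℂ) (v^3)
    have h2 : ‖(2:ℂ)‖ = 2 := by norm_num
    linarith
  have hlo : (7:ℝ)/8 ≤ ‖(1:ℂ)+v^3‖ := by
    have h1 : (1:ℂ) = (1+v^3) + (-v^3) := by ring
    have := norm_add_le ((1:ℂ)+v^3) (-v^3)
    rw [← h1, norm_one, norm_neg] at this
    linarith
  have hlo3 : (21:ℝ)/8 ≤ ‖(3:ℂ)*(1+v^3)‖ := by
    rw [norm_mul]
    have h3n : ‖(3:ℂ)‖ = 3 := by norm_num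
    rw [h3n]; linarith
  rw [norm_div, div_le_iff₀ (by linarith)]
  nlinarith

lemma Aseq_ne (a u : ℂ) (ha : a ≠ 0) (hu : ‖u‖ < 1) : ∀ n, Aseq a u n ≠ 0 := by
  intro n
  induction n with
  | zero => exact ha
  | succ n ih =>
    have hun : ‖Useq u n‖ < 1 := lt_of_le_of_lt (Useq_le u hu n) hu
    exact mul_ne_zero ih (div_ne_zero (two_add_cube_ne _ hun)
      (mul_ne_zero (by norm_num) (one_add_cube_ne _ hun)))

noncomputable def om : ℂ := ⟨-1/2, Real.sqrt 3 / 2⟩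

lemma om_rel : om^2 + om + 1 = 0 := by
  have hs : Real.sqrt 3 ^ 2 = 3 := Real.sq_sqrt (by norm_num)
  apply Complex.ext <;>
    simp [om, pow_two, Complex.mul_re, Complex.mul_im, Complex.add_re, Complex.add_im] <;>
    nlinarith [hs]

lemma om_sq : (om^2).re = -1/2 ∧ (om^2).im = -(Real.sqrt 3 / 2) := by
  have hs : Real.sqrt 3 ^ 2 = 3 := Real.sq_sqrt (by norm_num)
  constructor <;>
    simp [om, pow_two, Complex.mul_re, Complex.mul_im] <;> nlinarith [hs]

lemma om_sq_rel : (om^2)^2 + om^2 + 1 = 0 := by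
  linear_combination (om^2 - om + 1) * om_rel

lemma om_pow4 : (om^2)^2 = om := by
  linear_combination (om^2 - om) * om_rel

/-- If `w` is non-real then it is not equidistant from `om` and `om^2`. -/
lemma dist_ne (w : ℂ) (hw : w.im ≠ 0) : ‖w - om‖ ≠ ‖w - om^2‖ := by
  intro h
  have h2 : ‖w - om‖^2 = ‖w - om^2‖^2 := by rw [h]
  have e1 : ‖w - om‖^2 = (w.re + 1/2)^2 + (w.im - Real.sqrt 3/2)^2 := by
    rw [show ‖w - om‖^2 = (w-om).re^2 + (w-om).im^2 from by
      rw [Complex.sq_norm, Complex.normSq_apply]; ring]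
    simp [Complex.sub_re, Complex.sub_im, om]
    ring
  have e2 : ‖w - om^2‖^2 = (w.re + 1/2)^2 + (w.im + Real.sqrt 3/2)^2 := by
    rw [show ‖w - om^2‖^2 = (w-om^2).re^2 + (w-om^2).im^2 from by
      rw [Complex.sq_norm, Complex.normSq_apply]; ring]
    rw [Complex.sub_re, Complex.sub_im, om_sq.1, om_sq.2]
    ring
  rw [e1, e2] at h2
  have hs : 0 < Real.sqrt 3 := Real.sqrt_pos.mpr (by norm_num)
  have : w.im * Real.sqrt 3 = 0 := by nlinarith
  rcases mul_eq_zero.mp this with h' | h'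
  · exact hw h'
  · linarith

lemma init (z : Fin 3 → ℂ) (hplane : z 0 + z 1 + z 2 = 0)
    (hreal : ¬ ∃ (l : ℂ) (w : Fin 3 → ℝ), z = fun k => l * (w k : ℂ)) :
    ∃ ω a u : ℂ, (ω^2 + ω + 1 = 0) ∧ a ≠ 0 ∧ ‖u‖ < 1 ∧ z = fun k => a * vv ω u k := by
  -- z 0 ≠ 0
  have hz0 : z 0 ≠ 0 := by
    intro h0
    apply hreal
    refine ⟨z 1, ![0, 1, -1], ?_⟩
    funext k
    have h2 : z 2 = -z 1 := by linear_combination hplane - h0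
    fin_cases k <;> simp [h0, h2]
  set w := z 1 / z 0 with hwdef
  have hw1 : z 1 = z 0 * w := by rw [hwdef, mul_div_assoc', eq_div_iff hz0]; ring
  have hz2 : z 2 = -z 0 - z 1 := by linear_combination hplane
  have hwim : w.im ≠ 0 := by
    intro h
    apply hreal
    refine ⟨z 0, ![1, w.re, -1 - w.re], ?_⟩
    have hre : (w.re : ℂ) = w := Complex.ext rfl (by simp [h])
    funext k
    fin_cases k
    · simp
    · show z 1 = z 0 * ((w.re : ℂ))
      rw [hre, hw1]
    · show z 2 = z 0 * ((( -1 - w.re : ℝ)) : ℂ)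
      push_cast
      rw [hre, hz2, hw1]; ring
  by_cases hcase1 : w = om
  · refine ⟨om, z 0, 0, om_rel, hz0, by norm_num, ?_⟩
    funext k
    fin_cases k
    · show z 0 = z 0 * (1 - 0); ring
    · show z 1 = z 0 * (om - om^2*0); rw [hw1, hcase1]; ring
    · show z 2 = z 0 * (om^2 - om*0)
      rw [hz2, hw1, hcase1]
      linear_combination (-(z 0)) * om_rel
  by_cases hcase2 : w = om^2
  · refine ⟨om^2, z 0, 0, om_sq_rel, hz0, by norm_num, ?_⟩
    funext k
    fin_cases k
    · show z 0 = z 0 * (1 - 0); ring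
    · show z 1 = z 0 * (om^2 - (om^2)^2*0); rw [hw1, hcase2]; ring
    · show z 2 = z 0 * ((om^2)^2 - om^2*0)
      rw [hz2, hw1, hcase2, om_pow4]
      linear_combination (-(z 0)) * om_rel
  -- general case
  have hsub : w - om ≠ 0 := sub_ne_zero.mpr hcase1
  have hsub2 : w - om^2 ≠ 0 := sub_ne_zero.mpr hcase2
  have hdist := dist_ne w hwim
  rcases lt_or_ge ‖w - om‖ ‖w - om^2‖ with hlt | hge
  · -- ‖u0‖ < 1 with base om
    set u0 := (w - om)/(w - om^2) with hu0def
    have hu0 : ‖u0‖ < 1 := by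
      rw [hu0def, norm_div, div_lt_one (norm_pos_iff.mpr hsub2)]
      exact hlt
    have h1mu : (1:ℂ) - u0 ≠ 0 := by
      intro h
      have : u0 = 1 := by linear_combination -h
      rw [this] at hu0; norm_num at hu0
    have hkey : u0 * (w - om^2) = w - om := div_mul_cancel₀ _ hsub2
    refine ⟨om, z 0 / (1 - u0), u0, om_rel, div_ne_zero hz0 h1mu, hu0, ?_⟩
    funext k
    fin_cases k
    · show z 0 = z 0 / (1 - u0) * (1 - u0)
      field_simp
    · show z 1 = z 0 / (1 - u0) * (om - om^2*u0)
      rw [hw1, div_mul_eq_mul_div, eq_div_iff h1mu]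
      linear_combination (-(z 0)) * hkey
    · show z 2 = z 0 / (1 - u0) * (om^2 - om*u0)
      rw [hz2, hw1, div_mul_eq_mul_div, eq_div_iff h1mu]
      linear_combination (z 0) * hkey + (z 0)*(u0 - 1) * om_rel
  · -- ‖·‖ ≥ : base om^2, u1 = (w - om^2)/(w - om)
    set u1 := (w - om^2)/(w - om) with hu1def
    have hu1 : ‖u1‖ < 1 := by
      rw [hu1def, norm_div, div_lt_one (norm_pos_iff.mpr hsub)]
      cases lt_or_eq_of_le hge with
      | inl h => exact h
      | inr h => exact absurd h.symm hdist
    have h1mu : (1:ℂ) - u1 ≠ 0 := by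
      intro h
      have : u1 = 1 := by linear_combination -h
      rw [this] at hu1; norm_num at hu1
    have hkey : u1 * (w - om) = w - om^2 := div_mul_cancel₀ _ hsub
    refine ⟨om^2, z 0 / (1 - u1), u1, om_sq_rel, div_ne_zero hz0 h1mu, hu1, ?_⟩
    funext k
    fin_cases k
    · show z 0 = z 0 / (1 - u1) * (1 - u1)
      field_simp
    · show z 1 = z 0 / (1 - u1) * (om^2 - (om^2)^2*u1)
      rw [om_pow4, hw1, div_mul_eq_mul_div, eq_div_iff h1mu]
      linear_combination (-(z 0)) * hkey
    · show z 2 = z 0 / (1 - u1) * ((om^2)^2 - om^2*u1)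
      rw [om_pow4, hz2, hw1, div_mul_eq_mul_div, eq_div_iff h1mu]
      linear_combination (z 0) * hkey + (z 0)*(u1 - 1) * om_rel

lemma one_sub_ne (u : ℂ) (hu : ‖u‖ < 1) : (1:ℂ) - u ≠ 0 := by
  intro h
  have h1 : u = 1 := by linear_combination -h
  rw [h1] at hu; norm_num at hu

lemma vv_norm_pos (ω u : ℂ) (hu : ‖u‖ < 1) : 0 < ‖vv ω u‖ := by
  have h0 : ‖vv ω u 0‖ ≤ ‖vv ω u‖ := norm_le_pi_norm (vv ω u) 0
  have h1 : vv ω u 0 = 1 - u := rfl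
  have h2 : 0 < ‖(1:ℂ) - u‖ := norm_pos_iff.mpr (one_sub_ne u hu)
  rw [h1] at h0; linarith

lemma vv_norm_le (ω u : ℂ) (hω : ω^2 + ω + 1 = 0) (hu : ‖u‖ < 1) : ‖vv ω u‖ ≤ 2 := by
  rw [pi_norm_le_iff_of_nonneg (by norm_num)]
  intro i
  have hn1 : ‖ω‖ = 1 := norm_omega ω hω
  have hn2 : ‖ω^2‖ = 1 := by rw [norm_pow, hn1]; norm_num
  fin_cases i
  · show ‖(1:ℂ) - u‖ ≤ 2
    calc ‖(1:ℂ) - u‖ ≤ ‖(1:ℂ)‖ + ‖u‖ := norm_sub_le _ _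
    _ ≤ 2 := by rw [norm_one]; linarith
  · show ‖ω - ω^2*u‖ ≤ 2
    calc ‖ω - ω^2*u‖ ≤ ‖ω‖ + ‖ω^2*u‖ := norm_sub_le _ _
    _ = 1 + ‖u‖ := by rw [norm_mul, hn1, hn2, one_mul]
    _ ≤ 2 := by linarith
  · show ‖ω^2 - ω*u‖ ≤ 2
    calc ‖ω^2 - ω*u‖ ≤ ‖ω^2‖ + ‖ω*u‖ := norm_sub_le _ _
    _ = 1 + ‖u‖ := by rw [norm_mul, hn1, hn2, one_mul]
    _ ≤ 2 := by linarith

lemma vv_inj (ω u A : ℂ) (hω : ω^2 + ω + 1 = 0) (hA : A ≠ 0) (hu : ‖u‖ < 1) :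
    Function.Injective (fun k => A * vv ω u k) := by
  intro i j hij
  simp only at hij
  fin_cases i <;> fin_cases j
  · rfl
  · exact absurd (sub_eq_zero_of_eq (mul_left_cancel₀ hA hij)) (nz01 ω u hω hu)
  · exact absurd (sub_eq_zero_of_eq (mul_left_cancel₀ hA hij)) (nz02 ω u hω hu)
  · exact absurd (sub_eq_zero_of_eq (mul_left_cancel₀ hA hij).symm) (nz01 ω u hω hu)
  · rfl
  · exact absurd (sub_eq_zero_of_eq (mul_left_cancel₀ hA hij)) (nz12 ω u hω hu)
  · exact absurd (sub_eq_zero_of_eq (mul_left_cancel₀ hA hij).symm) (nz02 ω u hω hu)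
  · exact absurd (sub_eq_zero_of_eq (mul_left_cancel₀ hA hij).symm) (nz12 ω u hω hu)
  · rfl

/-- Convergence of the Weierstrass method for `Z³`: if `z` lies in the hyperplane
`z₁+z₂+z₃ = 0` and is not a scalar multiple of a vector with real entries, then
the orbit under `W_{Z³}` is defined for all iterates, converges to the zero
vector, and the convergence is linear with rate `2/3`. -/
theorem weierstrass_cubic_convergence
    (W : (Fin 3 → ℂ) → Fin 3 → ℂ)
    (hW : ∀ (w : Fin 3 → ℂ) (k : Fin 3),
      W w k = w k - (w k) ^ 3 / ∏ j ∈ univ.erase k, (w k - w j))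
    (z : Fin 3 → ℂ) (hplane : z 0 + z 1 + z 2 = 0)
    (hreal : ¬ ∃ (l : ℂ) (w : Fin 3 → ℝ), z = fun k => l * (w k : ℂ)) :
    (∀ n : ℕ, Function.Injective (W^[n] z)) ∧
    Tendsto (fun n : ℕ => W^[n] z) atTop (nhds 0) ∧
    Tendsto (fun n : ℕ => ‖W^[n + 1] z‖ / ‖W^[n] z‖) atTop (nhds (2 / 3)) := by
  obtain ⟨ω, a, u, hω, ha, hu, hz⟩ := init z hplane hreal
  have hUlt : ∀ n, ‖Useq u n‖ < 1 := fun n => lt_of_le_of_lt (Useq_le u hu n) hu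
  have hAne := Aseq_ne a u ha hu
  -- orbit description
  have horbit : ∀ n, W^[n] z = fun k => Aseq a u n * vv ω (Useq u n) k := by
    intro n
    induction n with
    | zero => simpa [Useq, Aseq] using hz
    | succ n ih =>
      rw [Function.iterate_succ_apply', ih, step W hW ω (Aseq a u n) (Useq u n) hω (hAne n) (hUlt n)]
      simp only [Aseq, Useq]
  -- norms
  have hsmul : ∀ n, (fun k => Aseq a u n * vv ω (Useq u n) k) = Aseq a u n • vv ω (Useq u n) := by
    intro n; funext k; simp [Pi.smul_apply, smul_eq_mul]
  have hnorm : ∀ n, ‖W^[n] z‖ = ‖Aseq a u n‖ * ‖vv ω (Useq u n)‖ := by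
    intro n; rw [horbit n, hsmul n, norm_smul]
  refine ⟨?_, ?_, ?_⟩
  · -- injectivity
    intro n
    rw [horbit n]
    exact vv_inj ω (Useq u n) (Aseq a u n) hω (hAne n) (hUlt n)
  · -- convergence to zero
    rw [tendsto_zero_iff_norm_tendsto_zero]
    have hA0 : Tendsto (fun n => ‖Aseq a u n‖) atTop (nhds 0) := by
      obtain ⟨N, hN⟩ := Metric.tendsto_atTop.mp (Useq_tendsto u hu) (1/2) (by norm_num)
      have hNle : ∀ n, N ≤ n → ‖Useq u n‖ ≤ 1/2 := by
        intro n hn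
        have := hN n hn
        rw [dist_zero_right] at this
        linarith
      have hgeo : ∀ m, ‖Aseq a u (N+m)‖ ≤ ‖Aseq a u N‖ * (17/21)^m := by
        intro m
        induction m with
        | zero => simp
        | succ m ih =>
          have hstep : Aseq a u (N+m+1) =
              Aseq a u (N+m) * ((2 + (Useq u (N+m))^3) / (3*(1 + (Useq u (N+m))^3))) := rfl
          have hb := sigma_bound (Useq u (N+m)) (hNle (N+m) (Nat.le_add_right N m))
          calc ‖Aseq a u (N+(m+1))‖
              = ‖Aseq a u (N+m)‖ * ‖(2 + (Useq u (N+m))^3) / (3*(1 + (Useq u (N+m))^3))‖ := by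
                rw [show N+(m+1) = N+m+1 from rfl, hstep, norm_mul]
          _ ≤ (‖Aseq a u N‖ * (17/21)^m) * (17/21) := by
                apply mul_le_mul ih hb (norm_nonneg _)
                positivity
          _ = ‖Aseq a u N‖ * (17/21)^(m+1) := by ring
      have hpow : Tendsto (fun m : ℕ => ‖Aseq a u N‖ * (17/21)^m) atTop (nhds 0) := by
        have := (tendsto_pow_atTop_nhds_zero_of_lt_one (by norm_num : (0:ℝ) ≤ 17/21)
          (by norm_num : (17/21:ℝ) < 1)).const_mul ‖Aseq a u N‖
        simpa using this
      have h1 : Tendsto (fun m => ‖Aseq a u (N+m)‖) atTop (nhds 0) :=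
        squeeze_zero (fun _ => norm_nonneg _) hgeo hpow
      have h2 : (fun m => ‖Aseq a u (N+m)‖) = fun m => ‖Aseq a u (m+N)‖ := by
        funext m; rw [Nat.add_comm]
      rw [h2] at h1
      exact (tendsto_add_atTop_iff_nat N).mp h1
    have hb : ∀ n, ‖W^[n] z‖ ≤ 2 * ‖Aseq a u n‖ := by
      intro n
      rw [hnorm n]
      calc ‖Aseq a u n‖ * ‖vv ω (Useq u n)‖ ≤ ‖Aseq a u n‖ * 2 :=
        mul_le_mul_of_nonneg_left (vv_norm_le ω (Useq u n) hω (hUlt n)) (norm_nonneg _)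
      _ = 2 * ‖Aseq a u n‖ := by ring
    have h2 : Tendsto (fun n : ℕ => 2 * ‖Aseq a u n‖) atTop (nhds 0) := by
      simpa using hA0.const_mul 2
    exact squeeze_zero (fun n => norm_nonneg _) hb h2
  · -- ratio
    set h : ℂ → ℝ := fun x =>
      ‖(2 + x^3) / (3*(1 + x^3))‖ * ‖vv ω (x * (1 + 2*x^3) / (2 + x^3))‖ / ‖vv ω x‖ with hhdef
    have hratio : ∀ n, ‖W^[n+1] z‖ / ‖W^[n] z‖ = h (Useq u n) := by
      intro n
      rw [hnorm (n+1), hnorm n]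
      have hstep : Aseq a u (n+1) =
          Aseq a u n * ((2 + (Useq u n)^3) / (3*(1 + (Useq u n)^3))) := rfl
      have hstepU : Useq u (n+1) = Useq u n * (1 + 2*(Useq u n)^3) / (2 + (Useq u n)^3) := rfl
      rw [hstep, hstepU, norm_mul, hhdef]
      have hAn : ‖Aseq a u n‖ ≠ 0 := norm_ne_zero_iff.mpr (hAne n)
      have hVn : ‖vv ω (Useq u n)‖ ≠ 0 := ne_of_gt (vv_norm_pos ω (Useq u n) (hUlt n))
      rw [mul_assoc, mul_div_mul_left _ _ hAn]
    have hz1 : ‖(0:ℂ)‖ < 1 := by norm_num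
    have hV0 : ‖vv ω 0‖ ≠ 0 := ne_of_gt (vv_norm_pos ω 0 hz1)
    have hcv : Continuous (vv ω) := by
      apply continuous_pi
      intro i
      fin_cases i
      · show Continuous fun x : ℂ => (1:ℂ) - x
        fun_prop
      · show Continuous fun x : ℂ => ω - ω^2*x
        fun_prop
      · show Continuous fun x : ℂ => ω^2 - ω*x
        fun_prop
    have hc1 : ContinuousAt (fun x : ℂ => (2 + x^3) / (3*(1 + x^3))) 0 := by
      apply ContinuousAt.div (by fun_prop) (by fun_prop)
      norm_num
    have hc2 : ContinuousAt (fun x : ℂ => x * (1 + 2*x^3) / (2 + x^3)) 0 := by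
      apply ContinuousAt.div (by fun_prop) (by fun_prop)
      norm_num
    have hcont : ContinuousAt h 0 := by
      rw [hhdef]
      apply ContinuousAt.div
      · exact (hc1.norm).mul ((hcv.continuousAt.comp hc2).norm)
      · exact (hcv.continuousAt).norm
      · exact hV0
    have hval : h 0 = 2/3 := by
      rw [hhdef]
      simp only
      norm_num
      rw [mul_div_assoc, div_self hV0, mul_one]
    have hcomp : Tendsto (fun n => h (Useq u n)) atTop (nhds (2/3)) := by
      rw [← hval]
      exact hcont.tendsto.comp (Useq_tendsto u hu)
    have hfun : (fun n : ℕ => ‖W^[n+1] z‖ / ‖W^[n] z‖) = fun n => h (Useq u n) :=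
      funext hratio
    rw [hfun]
    exact hcomp
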